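/- For any ε-fraction overlap: if two translated octahedra C₃ + x, C₃ + x' in ℝ³ have cross sections at height z₀ that are squares of edge lengths l, l' ∈ [√2/27, 53√2/27] with one square containing a vertex of the other, and the cross sections of one shrink while the other's grow as z increases, in the full-containment configuration, then vol((C₃+x) ∩ (C₃+x')) ≥ 4/3¹⁰. -/

import Mathlib

open Set Pointwise MeasureTheory ENNReal

/-- The regular octahedron `C₃` (the ℓ¹-ball of radius 2 in ℝ³). -/
def C₃ : Set (Fin 3 → ℝ) := {p | |p 0| + |p 1| + |p 2| ≤ 2}

/-- The square cross section of the translate `C₃ + x` at height `z₀`,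
viewed in the `(u,v)`-plane. -/
def crossSection (x : Fin 3 → ℝ) (z₀ : ℝ) : Set (ℝ × ℝ) :=
  {uv | |uv.1 - x 0| + |uv.2 - x 1| ≤ 2 - |z₀ - x 2|}

theorem l1ball_vol (r : ℝ) :
    volume {p : Fin 3 → ℝ | |p 0| + |p 1| + |p 2| ≤ r} =
      ENNReal.ofReal r ^ 3 * ENNReal.ofReal (4/3) := by
  have h := MeasureTheory.volume_sum_rpow_le (Fin 3) (p := 1) le_rfl r
  simp only [Real.rpow_one, Fin.sum_univ_three, Fintype.card_fin, div_one] at h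
  rw [h]
  norm_num [Nat.factorial]

/-- Opposite signs, full-containment configuration: the cross sections of
`C₃ + x` and `C₃ + x'` at height `z₀` are squares with edge lengths in
`[√2/27, 53√2/27]`; the sections of `C₃ + x` grow as `z` increases
(`δ = +1`, i.e. `z₀ ∈ [x₃-2, x₃]`) while those of `C₃ + x'` shrink
(`δ = -1`, i.e. `z₀ ∈ (x'₃, x'₃+2]`), and the square of `C₃ + x` is fully
contained in that of `C₃ + x'`. Then `vol((C₃+x) ∩ (C₃+x')) ≥ 4/3¹⁰`. -/
theorem opposite_sign_containment_overlap (x x' : Fin 3 → ℝ) (z₀ : ℝ)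
    (hδ : z₀ ∈ Icc (x 2 - 2) (x 2)) (hδ' : z₀ ∈ Ioc (x' 2) (x' 2 + 2))
    (hlo : Real.sqrt 2 / 27 ≤ Real.sqrt 2 * (2 - |z₀ - x 2|))
    (hhi : Real.sqrt 2 * (2 - |z₀ - x 2|) ≤ 53 * Real.sqrt 2 / 27)
    (hlo' : Real.sqrt 2 / 27 ≤ Real.sqrt 2 * (2 - |z₀ - x' 2|))
    (hhi' : Real.sqrt 2 * (2 - |z₀ - x' 2|) ≤ 53 * Real.sqrt 2 / 27)
    (hcontained : crossSection x z₀ ⊆ crossSection x' z₀) :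
    ENNReal.ofReal (4 / 3 ^ 10) ≤ volume ((x +ᵥ C₃) ∩ (x' +ᵥ C₃)) := by
  set r : ℝ := 2 - |z₀ - x 2| with hr_def
  set r' : ℝ := 2 - |z₀ - x' 2| with hr'_def
  have h2 : (0:ℝ) < Real.sqrt 2 := by positivity
  have hr : (1:ℝ)/27 ≤ r := by
    have := (mul_le_mul_iff_right₀ h2).mp (by linarith [hlo] : Real.sqrt 2 * (1/27) ≤ Real.sqrt 2 * r)
    linarith
  have hr' : (1:ℝ)/27 ≤ r' := by
    have := (mul_le_mul_iff_right₀ h2).mp (by linarith [hlo'] : Real.sqrt 2 * (1/27) ≤ Real.sqrt 2 * r')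
    linarith
  have hr0 : (0:ℝ) ≤ r := by linarith
  have habs : |z₀ - x 2| = 2 - r := by rw [hr_def]; ring
  have habs' : |z₀ - x' 2| = 2 - r' := by rw [hr'_def]; ring
  -- center distance bound from containment
  have hd : |x 0 - x' 0| + |x 1 - x' 1| + r ≤ r' := by
    have h1 : ((x 0 + r, x 1) : ℝ × ℝ) ∈ crossSection x z₀ := by
      simp [crossSection, abs_of_nonneg hr0]; linarith
    have h2' : ((x 0 - r, x 1) : ℝ × ℝ) ∈ crossSection x z₀ := by
      simp [crossSection, abs_of_nonneg hr0]; linarith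
    have c1 := hcontained h1
    have c2 := hcontained h2'
    simp only [crossSection, mem_setOf_eq] at c1 c2
    rcases le_total (x 0) (x' 0) with h | h
    · have e1 : |x 0 - r - x' 0| = x' 0 - x 0 + r := by
        rw [abs_of_nonpos (by linarith)]; ring
      have e2 : |x 0 - x' 0| = x' 0 - x 0 := by
        rw [abs_of_nonpos (by linarith)]; ring
      rw [e1] at c2; rw [e2]; linarith
    · have e1 : |x 0 + r - x' 0| = x 0 - x' 0 + r := by
        rw [abs_of_nonneg (by linarith)]; ring
      have e2 : |x 0 - x' 0| = x 0 - x' 0 := abs_of_nonneg (by linarith)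
      rw [e1] at c1; rw [e2]; linarith
  -- the small ball
  set S : Set (Fin 3 → ℝ) :=
    {p | |p 0 - x 0| + |p 1 - x 1| + |p 2 - z₀| ≤ r} with hS_def
  have hsub : S ⊆ (x +ᵥ C₃) ∩ (x' +ᵥ C₃) := by
    intro p hp
    simp only [hS_def, mem_setOf_eq] at hp
    constructor
    · rw [mem_vadd_set_iff_neg_vadd_mem]
      simp only [C₃, mem_setOf_eq, Pi.vadd_apply, vadd_eq_add, Pi.add_apply,
        Pi.neg_apply, neg_add_eq_sub, Pi.sub_apply]
      have a2 := abs_sub_le (p 2) z₀ (x 2)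
      linarith [hp, habs]
    · rw [mem_vadd_set_iff_neg_vadd_mem]
      simp only [C₃, mem_setOf_eq, Pi.vadd_apply, vadd_eq_add, Pi.add_apply,
        Pi.neg_apply, neg_add_eq_sub, Pi.sub_apply]
      have a0 := abs_sub_le (p 0) (x 0) (x' 0)
      have a1 := abs_sub_le (p 1) (x 1) (x' 1)
      have a2 := abs_sub_le (p 2) z₀ (x' 2)
      linarith [hp, habs', hd]
  refine le_trans ?_ (measure_mono hsub)
  -- volume of S
  have hSvol : volume S = ENNReal.ofReal r ^ 3 * ENNReal.ofReal (4/3) := by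
    have hset : S = (![x 0, x 1, z₀] : Fin 3 → ℝ) +ᵥ
        {p : Fin 3 → ℝ | |p 0| + |p 1| + |p 2| ≤ r} := by
      ext p
      rw [mem_vadd_set_iff_neg_vadd_mem]
      simp only [hS_def, mem_setOf_eq, Pi.vadd_apply, vadd_eq_add, Pi.add_apply,
        Pi.neg_apply, neg_add_eq_sub, Pi.sub_apply, Matrix.cons_val_zero, Matrix.cons_val_one,
        Matrix.head_cons, Matrix.cons_val_two, Matrix.tail_cons]
    rw [hset, measure_vadd, l1ball_vol]
  rw [hSvol]
  calc ENNReal.ofReal (4 / 3 ^ 10)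
      = ENNReal.ofReal ((1/27)^3 * (4/3)) := by norm_num
    _ = ENNReal.ofReal ((1:ℝ)/27) ^ 3 * ENNReal.ofReal (4/3) := by
        rw [ENNReal.ofReal_mul (by positivity), ENNReal.ofReal_pow (by norm_num : (0:ℝ) ≤ 1/27)]
    _ ≤ ENNReal.ofReal r ^ 3 * ENNReal.ofReal (4/3) := by
        gcongr
        all_goals exact ENNReal.ofReal_le_ofReal hr
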